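/- Let G = K_{2k+3}, C = (v_1,...,v_{2k+1}) a cycle of length 2k+1 in G, and s,t the remaining two vertices. Then the C-induced constraint is facet-defining for the dominant of the odd cycle polytope of G: the incidence vectors of odd cycles that are tight for the constraint linearly span R^E. -/

import Mathlib

open SimpleGraph

def ellLen (k a b : ℕ) : ℕ :=
  if (max a b - min a b) % 2 = 1 then max a b - min a b
  else 2 * k + 1 - (max a b - min a b)

def cCoeffFun (k a b : ℕ) : ℕ :=
  if a = b then 0
  else if max a b < 2 * k + 1 then ellLen k a b
  else if min a b < 2 * k + 1 then k
  else 1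

/-- Coefficients of the `C`-induced constraint on `K_{2k+3}` (cycle vertices `0,…,2k`,
`s = 2k+1`, `t = 2k+2`), as a function on unordered edges. -/
def cCoeff (k : ℕ) : Sym2 (Fin (2 * k + 3)) → ℕ :=
  Sym2.lift ⟨fun a b => cCoeffFun k a.val b.val, fun a b => by
    simp only [cCoeffFun, ellLen, Nat.max_comm, Nat.min_comm, eq_comm]⟩

namespace OddCyc
variable (k : ℕ)
def vv (i : ℕ) : Fin (2 * k + 3) := ⟨i % (2 * k + 1), by have := Nat.mod_lt i (show 0 < 2*k+1 by omega); omega⟩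
def sv : Fin (2 * k + 3) := ⟨2 * k + 1, by omega⟩
def tv : Fin (2 * k + 3) := ⟨2 * k + 2, by omega⟩

lemma cCoeff_mk (a b : Fin (2*k+3)) : cCoeff k s(a, b) = cCoeffFun k a.val b.val := rfl

lemma vv_val (i : ℕ) : (vv k i).val = i % (2*k+1) := rfl

lemma vv_add_period (i : ℕ) : vv k (i + (2*k+1)) = vv k i := by
  simp [vv, Nat.add_mod_right]

lemma vv_ne (i a : ℕ) (h1 : 1 ≤ a) (h2 : a ≤ 2*k) : vv k (i + a) ≠ vv k i := by
  intro h
  have h' : (i + a) % (2*k+1) = i % (2*k+1) := congrArg Fin.val h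
  obtain ⟨c, hc⟩ := (Nat.modEq_iff_dvd' (Nat.le_add_right i a)).mp (Nat.ModEq.symm h')
  have hc' : a = (2*k+1) * c := by omega
  rcases c with _ | c
  · omega
  · have : 2*k+1 ≤ (2*k+1) * (c+1) := Nat.le_mul_of_pos_right _ (by omega)
    omega

lemma vv_ne_sv (i : ℕ) : vv k i ≠ sv k := by
  intro h; have h' : i % (2*k+1) = 2*k+1 := congrArg Fin.val h
  have := Nat.mod_lt i (show 0 < 2*k+1 by omega); omega

lemma vv_ne_tv (i : ℕ) : vv k i ≠ tv k := by
  intro h; have h' : i % (2*k+1) = 2*k+2 := congrArg Fin.val h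
  have := Nat.mod_lt i (show 0 < 2*k+1 by omega); omega

lemma sv_ne_tv : sv k ≠ tv k := by
  intro h; have h' : 2*k+1 = 2*k+2 := congrArg Fin.val h; omega

lemma coeff_chord (i a : ℕ) (ha : a % 2 = 1) (h2 : a ≤ 2*k) :
    cCoeff k s(vv k i, vv k (i+a)) = a := by
  rw [cCoeff_mk, vv_val, vv_val]
  have hm : 0 < 2*k+1 := by omega
  have hu : i % (2*k+1) < 2*k+1 := Nat.mod_lt _ hm
  have hrw : (i + a) % (2*k+1) = (i % (2*k+1) + a) % (2*k+1) := by
    conv_lhs => rw [Nat.add_mod]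
    rw [Nat.mod_eq_of_lt (show a < 2*k+1 by omega)]
  rw [hrw]
  rcases Nat.lt_or_ge (i % (2*k+1) + a) (2*k+1) with h | h
  · rw [Nat.mod_eq_of_lt h]
    simp only [cCoeffFun, ellLen]; split_ifs <;> omega
  · have : (i % (2*k+1) + a) % (2*k+1) = i % (2*k+1) + a - (2*k+1) := by
      rw [Nat.mod_eq_sub_mod h, Nat.mod_eq_of_lt (by omega)]
    rw [this]
    simp only [cCoeffFun, ellLen]; split_ifs <;> omega

lemma coeff_sv (i : ℕ) : cCoeff k s(vv k i, sv k) = k := by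
  rw [cCoeff_mk, vv_val]
  have hu : i % (2*k+1) < 2*k+1 := Nat.mod_lt _ (by omega)
  simp only [cCoeffFun, sv]; split_ifs <;> simp_all <;> omega

lemma coeff_tv (i : ℕ) : cCoeff k s(vv k i, tv k) = k := by
  rw [cCoeff_mk, vv_val]
  have hu : i % (2*k+1) < 2*k+1 := Nat.mod_lt _ (by omega)
  simp only [cCoeffFun, tv]; split_ifs <;> simp_all <;> omega

lemma coeff_st : cCoeff k s(sv k, tv k) = 1 := by
  rw [cCoeff_mk]
  simp only [cCoeffFun, sv, tv]; split_ifs <;> simp_all <;> omega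


def tri {V : Type*} {a b c : V} (hab : a ≠ b) (hbc : b ≠ c) (hca : c ≠ a) :
    (⊤ : SimpleGraph V).Walk a a :=
  Walk.cons (by simpa using hab) (Walk.cons (by simpa using hbc)
    (Walk.cons (by simpa using hca) Walk.nil))

lemma tri_edges {V : Type*} {a b c : V} (hab : a ≠ b) (hbc : b ≠ c) (hca : c ≠ a) :
    (tri hab hbc hca).edges = [s(a,b), s(b,c), s(c,a)] := rfl

lemma tri_isCycle {V : Type*} [DecidableEq V] {a b c : V} (hab : a ≠ b) (hbc : b ≠ c) (hca : c ≠ a) :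
    (tri hab hbc hca).IsCycle := by
  rw [Walk.isCycle_def]
  refine ⟨?_, by simp [tri], ?_⟩
  · rw [Walk.isTrail_def, tri_edges]
    simp only [List.nodup_cons, List.mem_cons, List.not_mem_nil, or_false,
      List.mem_singleton, List.nodup_nil, and_true, not_or, Sym2.eq_iff]
    refine ⟨⟨?_, ?_⟩, ?_⟩ <;> tauto
  · show ([a,b,c,a].tail).Nodup
    simp only [List.tail, List.nodup_cons, List.mem_cons, List.not_mem_nil, or_false,
      List.mem_singleton, List.nodup_nil, and_true, not_or]
    tauto

def pent {V : Type*} {a b c d e : V} (hab : a ≠ b) (hbc : b ≠ c) (hcd : c ≠ d)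
    (hde : d ≠ e) (hea : e ≠ a) : (⊤ : SimpleGraph V).Walk a a :=
  Walk.cons (by simpa using hab) (Walk.cons (by simpa using hbc)
    (Walk.cons (by simpa using hcd) (Walk.cons (by simpa using hde)
      (Walk.cons (by simpa using hea) Walk.nil))))

lemma pent_edges {V : Type*} {a b c d e : V} (hab : a ≠ b) (hbc : b ≠ c) (hcd : c ≠ d)
    (hde : d ≠ e) (hea : e ≠ a) :
    (pent hab hbc hcd hde hea).edges = [s(a,b), s(b,c), s(c,d), s(d,e), s(e,a)] := rfl

lemma pent_isCycle {V : Type*} [DecidableEq V] {a b c d e : V}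
    (hab : a ≠ b) (hbc : b ≠ c) (hcd : c ≠ d) (hde : d ≠ e) (hea : e ≠ a)
    (hac : a ≠ c) (had : a ≠ d) (hbd : b ≠ d) (hbe : b ≠ e) (hce : c ≠ e) :
    (pent hab hbc hcd hde hea).IsCycle := by
  rw [Walk.isCycle_def]
  refine ⟨?_, by simp [pent], ?_⟩
  · rw [Walk.isTrail_def, pent_edges]
    simp only [List.nodup_cons, List.mem_cons, List.not_mem_nil, or_false,
      List.mem_singleton, List.nodup_nil, and_true, not_or, Sym2.eq_iff]
    refine ⟨⟨?_,?_,?_,?_⟩,⟨?_,?_,?_⟩,⟨?_,?_⟩,?_⟩ <;> tauto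
  · show ([a,b,c,d,e,a].tail).Nodup
    simp only [List.tail, List.nodup_cons, List.mem_cons, List.not_mem_nil, or_false,
      List.mem_singleton, List.nodup_nil, and_true, not_or]
    tauto

lemma indicator_eq_sum {V : Type*} [DecidableEq V] (l : List (Sym2 V)) (h : l.Nodup) :
    (fun e' => if e' ∈ l then (1:ℝ) else 0) = (l.map (fun e => Pi.single e (1:ℝ))).sum := by
  induction l with
  | nil => funext y; simp
  | cons e l ih =>
    rw [List.nodup_cons] at h
    funext y
    have := congrFun (ih h.2) y
    simp only [List.map_cons, List.sum_cons, Pi.add_apply, List.mem_cons] at *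
    rw [← this, Pi.single_apply]
    by_cases hy : y = e
    · subst hy; simp [h.1]
    · simp [hy]

def tightSet (k : ℕ) : Set (Sym2 (Fin (2 * k + 3)) → ℝ) :=
  {x : Sym2 (Fin (2 * k + 3)) → ℝ |
    ∃ (u : Fin (2 * k + 3)) (p : (⊤ : SimpleGraph (Fin (2 * k + 3))).Walk u u),
      p.IsCycle ∧ Odd p.length ∧
      (p.edges.map (cCoeff k)).sum = 2 * k + 1 ∧
      x = fun e' => if e' ∈ p.edges then (1 : ℝ) else 0}

variable {k : ℕ} {f : Module.Dual ℝ (Sym2 (Fin (2*k+3)) → ℝ)}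

lemma tri_rel (hf : ∀ v ∈ tightSet k, f v = 0) {a b c : Fin (2*k+3)}
    (hab : a ≠ b) (hbc : b ≠ c) (hca : c ≠ a)
    (hco : cCoeff k s(a,b) + cCoeff k s(b,c) + cCoeff k s(c,a) = 2*k+1) :
    f (Pi.single s(a,b) 1) + f (Pi.single s(b,c) 1) + f (Pi.single s(c,a) 1) = 0 := by
  have hcyc := tri_isCycle hab hbc hca
  have hmem : (fun e' => if e' ∈ (tri hab hbc hca).edges then (1:ℝ) else 0) ∈ tightSet k := by
    refine ⟨a, tri hab hbc hca, hcyc, ⟨1, rfl⟩, ?_, rfl⟩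
    rw [tri_edges]
    simp only [List.map_cons, List.map_nil, List.sum_cons, List.sum_nil, add_zero]
    omega
  have h0 := hf _ hmem
  rw [indicator_eq_sum _ hcyc.edges_nodup, tri_edges] at h0
  simp only [List.map_cons, List.map_nil, List.sum_cons, List.sum_nil, add_zero, map_add] at h0
  linarith [h0]

lemma pent_rel (hf : ∀ v ∈ tightSet k, f v = 0) {a b c d e : Fin (2*k+3)}
    (hab : a ≠ b) (hbc : b ≠ c) (hcd : c ≠ d) (hde : d ≠ e) (hea : e ≠ a)
    (hac : a ≠ c) (had : a ≠ d) (hbd : b ≠ d) (hbe : b ≠ e) (hce : c ≠ e)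
    (hco : cCoeff k s(a,b) + cCoeff k s(b,c) + cCoeff k s(c,d) + cCoeff k s(d,e)
      + cCoeff k s(e,a) = 2*k+1) :
    f (Pi.single s(a,b) 1) + f (Pi.single s(b,c) 1) + f (Pi.single s(c,d) 1)
      + f (Pi.single s(d,e) 1) + f (Pi.single s(e,a) 1) = 0 := by
  have hcyc := pent_isCycle hab hbc hcd hde hea hac had hbd hbe hce
  have hmem : (fun e' => if e' ∈ (pent hab hbc hcd hde hea).edges then (1:ℝ) else 0)
      ∈ tightSet k := by
    refine ⟨a, pent hab hbc hcd hde hea, hcyc, ⟨2, rfl⟩, ?_, rfl⟩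
    rw [pent_edges]
    simp only [List.map_cons, List.map_nil, List.sum_cons, List.sum_nil, add_zero]
    omega
  have h0 := hf _ hmem
  rw [indicator_eq_sum _ hcyc.edges_nodup, pent_edges] at h0
  simp only [List.map_cons, List.map_nil, List.sum_cons, List.sum_nil, add_zero, map_add] at h0
  linarith [h0]



def CS (k : ℕ) (x : Sym2 (Fin (2*k+3)) → ℝ) (i : ℕ) : ℝ := x s(vv k i, sv k)
def CT (k : ℕ) (x : Sym2 (Fin (2*k+3)) → ℝ) (i : ℕ) : ℝ := x s(vv k i, tv k)
def CC (k : ℕ) (x : Sym2 (Fin (2*k+3)) → ℝ) (i a : ℕ) : ℝ := x s(vv k i, vv k (i+a))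
def XST (k : ℕ) (x : Sym2 (Fin (2*k+3)) → ℝ) : ℝ := x s(sv k, tv k)

lemma solve (k : ℕ) (hk : 1 ≤ k) (x : Sym2 (Fin (2*k+3)) → ℝ)
    (htri : ∀ a b c : Fin (2*k+3), a ≠ b → b ≠ c → c ≠ a →
      cCoeff k s(a,b) + cCoeff k s(b,c) + cCoeff k s(c,a) = 2*k+1 →
      x s(a,b) + x s(b,c) + x s(c,a) = 0)
    (hpent : ∀ a b c d e : Fin (2*k+3), a ≠ b → b ≠ c → c ≠ d → d ≠ e → e ≠ a →
      a ≠ c → a ≠ d → b ≠ d → b ≠ e → c ≠ e →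
      cCoeff k s(a,b) + cCoeff k s(b,c) + cCoeff k s(c,d) + cCoeff k s(d,e)
        + cCoeff k s(e,a) = 2*k+1 →
      x s(a,b) + x s(b,c) + x s(c,d) + x s(d,e) + x s(e,a) = 0) :
    ∀ a b : Fin (2*k+3), a ≠ b → x s(a,b) = 0 := by
  have hsymm : ∀ a b : Fin (2*k+3), x s(a,b) = x s(b,a) := fun a b => by rw [Sym2.eq_swap]
  -- R1
  have R1 : ∀ i : ℕ, CS k x i + XST k x + CT k x i = 0 := by
    intro i
    have h := htri (vv k i) (sv k) (tv k) (vv_ne_sv k i) (sv_ne_tv k) ((vv_ne_tv k i).symm) ?co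
    case co =>
      rw [(Sym2.eq_swap : s(tv k, vv k i) = s(vv k i, tv k)), coeff_sv, coeff_st, coeff_tv]
      omega
    rw [(Sym2.eq_swap : s(tv k, vv k i) = s(vv k i, tv k))] at h
    exact h
  -- R2
  have R2 : ∀ i : ℕ, CC k x i 1 + CS k x (i+1) + CS k x i = 0 := by
    intro i
    have h := htri (vv k i) (vv k (i+1)) (sv k) ((vv_ne k i 1 (by omega) (by omega)).symm)
      (vv_ne_sv k (i+1)) ((vv_ne_sv k i).symm) ?co
    case co =>
      rw [(Sym2.eq_swap : s(sv k, vv k i) = s(vv k i, sv k)), coeff_chord k i 1 (by omega) (by omega),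
        coeff_sv, coeff_sv]
      omega
    rw [(Sym2.eq_swap : s(sv k, vv k i) = s(vv k i, sv k))] at h
    exact h
  have R3 : ∀ i : ℕ, CC k x i 1 + CT k x (i+1) + CT k x i = 0 := by
    intro i
    have h := htri (vv k i) (vv k (i+1)) (tv k) ((vv_ne k i 1 (by omega) (by omega)).symm)
      (vv_ne_tv k (i+1)) ((vv_ne_tv k i).symm) ?co
    case co =>
      rw [(Sym2.eq_swap : s(tv k, vv k i) = s(vv k i, tv k)), coeff_chord k i 1 (by omega) (by omega),
        coeff_tv, coeff_tv]
      omega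
    rw [(Sym2.eq_swap : s(tv k, vv k i) = s(vv k i, tv k))] at h
    exact h
  -- R4
  have R4 : ∀ i a b : ℕ, a % 2 = 1 → b % 2 = 1 → a + b ≤ 2*k →
      CC k x i a + CC k x (i+a) b + CC k x i (a+b) = 0 := by
    intro i a b ha hb hab
    have hvv : vv k ((i+a+b) + (2*k+1-(a+b))) = vv k i := by
      rw [show (i+a+b) + (2*k+1-(a+b)) = i + (2*k+1) from by omega, vv_add_period]
    have hca : vv k (i+a+b) ≠ vv k i := by
      have := vv_ne k i (a+b) (by omega) (by omega)
      rwa [← Nat.add_assoc] at this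
    have h := htri (vv k i) (vv k (i+a)) (vv k (i+a+b))
      ((vv_ne k i a (by omega) (by omega)).symm)
      ((vv_ne k (i+a) b (by omega) (by omega)).symm) hca ?co
    case co =>
      have hco3 : cCoeff k s(vv k (i+a+b), vv k i) = 2*k+1-(a+b) := by
        rw [← hvv]; exact coeff_chord k (i+a+b) (2*k+1-(a+b)) (by omega) (by omega)
      rw [coeff_chord k i a (by omega) (by omega), coeff_chord k (i+a) b (by omega) (by omega), hco3]
      omega
    have e3 : x s(vv k (i+a+b), vv k i) = CC k x i (a+b) := by
      rw [hsymm]; unfold CC; rw [← Nat.add_assoc]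
    rw [e3] at h
    exact h
  -- periodicity of CS/CT
  have hperS : ∀ i, CS k x (i + (2*k+1)) = CS k x i := by
    intro i; unfold CS; rw [vv_add_period]
  have hperT : ∀ i, CT k x (i + (2*k+1)) = CT k x i := by
    intro i; unfold CT; rw [vv_add_period]
  -- CS = CT
  have hy : ∀ i, CS k x (i+1) - CT k x (i+1) = -(CS k x i - CT k x i) := by
    intro i; have h2 := R2 i; have h3 := R3 i; linarith
  have hpow : ∀ j i, CS k x (i+j) - CT k x (i+j) = (-1)^j * (CS k x i - CT k x i) := by
    intro j
    induction j with
    | zero => intro i; simp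
    | succ j ih =>
      intro i
      have h1 := hy (i+j)
      have h2 := ih i
      have : i + (j+1) = (i+j)+1 := rfl
      rw [this]
      linear_combination h1 - h2
  have hy0 : ∀ i, CS k x i = CT k x i := by
    intro i
    have h := hpow (2*k+1) i
    rw [hperS, hperT, Odd.neg_one_pow ⟨k, by ring⟩] at h
    linarith
  have hcs : ∀ i, CS k x i = CS k x 0 := by
    intro i
    have h1 := R1 i; have h2 := R1 0
    have h3 := hy0 i; have h4 := hy0 0
    linarith
  have hxst : XST k x = -2 * CS k x 0 := by
    have h1 := R1 0; have h2 := hy0 0; linarith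
  have hc1 : ∀ i, CC k x i 1 = -2 * CS k x 0 := by
    intro i
    have h := R2 i; have h1 := hcs i; have h2 := hcs (i+1); linarith
  have hc2 : ∀ i, CC k x i 2 = 4 * CS k x 0 := by
    intro i
    have h := R4 i 1 1 (by omega) (by omega) (by omega)
    norm_num at h
    have h1 := hc1 i; have h2 := hc1 (i+1); linarith
  have hconst : ∀ b, b % 2 = 1 → b ≤ 2*k-1 → ∀ i, CC k x i b = CC k x 0 b := by
    intro b hb1 hb2
    have hstep : ∀ i, CC k x (i+1) b = CC k x i b := by
      intro i
      have h1 := R4 i 1 b (by omega) hb1 (by omega)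
      have h2 := R4 i b 1 hb1 (by omega) (by omega)
      rw [Nat.add_comm 1 b] at h1
      have h3 := hc1 i; have h4 := hc1 (i+b)
      linarith
    intro i
    induction i with
    | zero => rfl
    | succ i ih => rw [hstep i, ih]
  have heven : ∀ b, b % 2 = 1 → b + 1 ≤ 2*k → CC k x 0 (b+1) = 2*CS k x 0 - CC k x 0 b := by
    intro b hb1 hb2
    have h2 := R4 0 b 1 hb1 (by omega) (by omega)
    have h3 := hc1 (0+b)
    have h4 : CC k x 0 b = CC k x 0 b := rfl
    linarith
  have hsym2 : CC k x 0 2 = CC k x 0 (2*k-1) := by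
    have h1 : vv k (2 + (2*k-1)) = vv k 0 := by
      rw [show 2+(2*k-1) = 0 + (2*k+1) from by omega, vv_add_period]
    have h2 : CC k x 2 (2*k-1) = CC k x 0 (2*k-1) := hconst (2*k-1) (by omega) (by omega) 2
    have e1 : CC k x 0 2 = CC k x 2 (2*k-1) := by
      unfold CC
      rw [hsymm, h1]
    exact e1.trans h2
  have hrec : ∀ d, d % 2 = 1 → 5 ≤ d → d ≤ 2*k-1 →
      CC k x 0 d = CC k x 0 (d-2) + CC k x 0 3 + 2*CS k x 0 := by
    intro d h1 h5 h2
    have hs := R4 0 (d-2) 3 (by omega) (by omega) (by omega)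
    have h3 : CC k x (0+(d-2)) 3 = CC k x 0 3 := hconst 3 (by omega) (by omega) (0+(d-2))
    rw [show (d-2)+3 = d+1 from by omega] at hs
    have he := heven d h1 (by omega)
    linarith
  have hformula : ∀ j, j ≤ k-1 →
      CC k x 0 (2*j+1) = -2*CS k x 0 + (j:ℝ)*(2*CS k x 0 + CC k x 0 3) := by
    intro j
    induction j with
    | zero => intro _; simpa using hc1 0
    | succ j ih =>
      intro hj
      by_cases hj0 : j = 0
      · subst hj0
        have h3 : CC k x 0 (2*(0+1)+1) = CC k x 0 3 := by norm_num
        rw [h3]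
        push_cast
        ring
      · have hd := hrec (2*(j+1)+1) (by omega) (by omega) (by omega)
        rw [show 2*(j+1)+1-2 = 2*j+1 from by omega] at hd
        rw [hd, ih (by omega)]
        push_cast
        ring
  -- main: z = 0 (and C3 = 0 when k ≥ 2)
  have hmain : CS k x 0 = 0 ∧ ∀ j, j ≤ k-1 → CC k x 0 (2*j+1) = 0 := by
    rcases Nat.lt_or_ge k 2 with hk2 | hk2
    · -- k = 1
      have hz : CS k x 0 = 0 := by
        have h1 := hc2 0
        have h2 := hc1 0
        rw [show 2*k-1 = 1 from by omega] at hsym2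
        linarith
      refine ⟨hz, fun j hj => ?_⟩
      have hj0 : j = 0 := by omega
      subst hj0
      have h2 := hc1 0
      have h3 : CC k x 0 (2*0+1) = CC k x 0 1 := by norm_num
      rw [h3, h2, hz]; ring
    · -- k ≥ 2 : pentagon
      have h01 : cCoeff k s(vv k 0, vv k 1) = 1 := coeff_chord k 0 1 (by omega) (by omega)
      have h12 : cCoeff k s(vv k 1, vv k 2) = 1 := coeff_chord k 1 1 (by omega) (by omega)
      have h23 : cCoeff k s(vv k 2, vv k 3) = 1 := coeff_chord k 2 1 (by omega) (by omega)
      have h34 : cCoeff k s(vv k 3, vv k 4) = 1 := coeff_chord k 3 1 (by omega) (by omega)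
      have hvv : vv k (4 + (2*k-3)) = vv k 0 := by
        rw [show 4+(2*k-3) = 0 + (2*k+1) from by omega, vv_add_period]
      have h40 : cCoeff k s(vv k 4, vv k 0) = 2*k-3 := by
        rw [← hvv]; exact coeff_chord k 4 (2*k-3) (by omega) (by omega)
      have hp := hpent (vv k 0) (vv k 1) (vv k 2) (vv k 3) (vv k 4)
        ((vv_ne k 0 1 (by omega) (by omega)).symm)
        ((vv_ne k 1 1 (by omega) (by omega)).symm)
        ((vv_ne k 2 1 (by omega) (by omega)).symm)
        ((vv_ne k 3 1 (by omega) (by omega)).symm)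
        (vv_ne k 0 4 (by omega) (by omega))
        ((vv_ne k 0 2 (by omega) (by omega)).symm)
        ((vv_ne k 0 3 (by omega) (by omega)).symm)
        ((vv_ne k 1 2 (by omega) (by omega)).symm)
        ((vv_ne k 1 3 (by omega) (by omega)).symm)
        ((vv_ne k 2 2 (by omega) (by omega)).symm)
        (by rw [h01, h12, h23, h34, h40]; omega)
      have e40 : x s(vv k 4, vv k 0) = CC k x 4 (2*k-3) := by
        unfold CC; rw [hvv]
      rw [e40] at hp
      have e0 : x s(vv k 0, vv k 1) = CC k x 0 1 := rfl
      have e1 : x s(vv k 1, vv k 2) = CC k x 1 1 := rfl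
      have e2 : x s(vv k 2, vv k 3) = CC k x 2 1 := rfl
      have e3 : x s(vv k 3, vv k 4) = CC k x 3 1 := rfl
      rw [e0, e1, e2, e3] at hp
      have hcst : CC k x 4 (2*k-3) = CC k x 0 (2*k-3) := hconst (2*k-3) (by omega) (by omega) 4
      rw [hcst] at hp
      have hC2k3 : CC k x 0 (2*k-3) = 8 * CS k x 0 := by
        have a0 := hc1 0; have a1 := hc1 1; have a2 := hc1 2; have a3 := hc1 3
        linarith
      have hC2k1 : CC k x 0 (2*k-1) = 4 * CS k x 0 := by
        rw [← hsym2]; exact hc2 0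
      have E1 : -2*CS k x 0 + ((k:ℝ)-1)*(2*CS k x 0 + CC k x 0 3) = 4 * CS k x 0 := by
        have hf1 := hformula (k-1) (le_refl _)
        rw [show 2*(k-1)+1 = 2*k-1 from by omega, hC2k1, Nat.cast_sub (by omega : 1 ≤ k)] at hf1
        push_cast at hf1
        linarith
      have E2 : -2*CS k x 0 + ((k:ℝ)-2)*(2*CS k x 0 + CC k x 0 3) = 8 * CS k x 0 := by
        have hf2 := hformula (k-2) (by omega)
        rw [show 2*(k-2)+1 = 2*k-3 from by omega, hC2k3, Nat.cast_sub (by omega : 2 ≤ k)] at hf2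
        push_cast at hf2
        linarith
      have E3 : 2*CS k x 0 + CC k x 0 3 = -4 * CS k x 0 := by
        linear_combination E1 - E2
      have E4 : (4*(k:ℝ)+2) * CS k x 0 = 0 := by
        linear_combination (-1 : ℝ)*E1 + ((k:ℝ)-1)*E3
      have hz : CS k x 0 = 0 := by
        rcases mul_eq_zero.mp E4 with h | h
        · exfalso
          have : (0:ℝ) < 4*(k:ℝ)+2 := by positivity
          linarith
        · exact h
      have hC3 : CC k x 0 3 = 0 := by rw [hz] at E3; linarith
      refine ⟨hz, fun j hj => ?_⟩
      rw [hformula j hj, hz, hC3]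
      ring
  obtain ⟨hz, hodd⟩ := hmain
  have hallchord : ∀ i d, 1 ≤ d → d ≤ 2*k → CC k x i d = 0 := by
    intro i d h1 h2
    by_cases hd : d % 2 = 1
    · rw [hconst d hd (by omega) i]
      have h := hodd ((d-1)/2) (by omega)
      rwa [show 2*((d-1)/2)+1 = d from by omega] at h
    · have hr := R4 i (d-1) 1 (by omega) (by omega) (by omega)
      rw [show (d-1)+1 = d from by omega] at hr
      have ho : CC k x i (d-1) = 0 := by
        rw [hconst (d-1) (by omega) (by omega) i]
        have h := hodd ((d-2)/2) (by omega)
        rwa [show 2*((d-2)/2)+1 = d-1 from by omega] at h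
      have hcc := hc1 (i+(d-1))
      rw [hz] at hcc
      linarith
  have hcsall : ∀ i, CS k x i = 0 := fun i => by rw [hcs i, hz]
  have hctall : ∀ i, CT k x i = 0 := fun i => by rw [← hy0 i]; exact hcsall i
  have hxst0 : XST k x = 0 := by rw [hxst, hz]; ring
  -- final classification
  have aux : ∀ u v : Fin (2*k+3), u.val < v.val → x s(u,v) = 0 := by
    intro u v huv
    have hv := v.isLt
    rcases Nat.lt_or_ge v.val (2*k+1) with h | h
    · have hu' : vv k u.val = u := by
        apply Fin.ext
        rw [vv_val]
        exact Nat.mod_eq_of_lt (by omega)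
      have hv' : vv k (u.val + (v.val - u.val)) = v := by
        apply Fin.ext
        rw [vv_val, show u.val + (v.val - u.val) = v.val from by omega]
        exact Nat.mod_eq_of_lt h
      have hch := hallchord u.val (v.val - u.val) (by omega) (by omega)
      unfold CC at hch
      rwa [hu', hv'] at hch
    · have hv2 : v.val = 2*k+1 ∨ v.val = 2*k+2 := by omega
      rcases hv2 with h' | h'
      · -- v = sv
        have hveq : v = sv k := Fin.ext h'
        have hu' : vv k u.val = u := by
          apply Fin.ext; rw [vv_val]; exact Nat.mod_eq_of_lt (by omega)
        have hcc := hcsall u.val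
        unfold CS at hcc
        rwa [hu', ← hveq] at hcc
      · rcases Nat.lt_or_ge u.val (2*k+1) with h'' | h''
        · have hveq : v = tv k := Fin.ext h'
          have hu' : vv k u.val = u := by
            apply Fin.ext; rw [vv_val]; exact Nat.mod_eq_of_lt (by omega)
          have hcc := hctall u.val
          unfold CT at hcc
          rwa [hu', ← hveq] at hcc
        · have hueq : u = sv k := by apply Fin.ext; show u.val = 2*k+1; omega
          have hveq : v = tv k := Fin.ext h'
          have hcc := hxst0
          unfold XST at hcc
          rwa [← hueq, ← hveq] at hcc
  intro a b hab
  rcases lt_trichotomy a.val b.val with h | h | h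
  · exact aux a b h
  · exact absurd (Fin.ext h) hab
  · rw [hsymm]; exact aux b a h

end OddCyc

/-- The `C`-induced constraint is facet-defining for the dominant of the odd cycle
polytope of `K_{2k+3}`: the incidence vectors of the odd cycles that are tight for the
constraint linearly span all of `ℝ^E`, i.e. the standard basis vector of every edge of
the complete graph lies in their span. -/
theorem stmt_4 (k : ℕ) (hk : 1 ≤ k) (e : Sym2 (Fin (2 * k + 3))) (he : ¬e.IsDiag) :
    (fun e' => if e' = e then (1 : ℝ) else 0) ∈ Submodule.span ℝ
      {x : Sym2 (Fin (2 * k + 3)) → ℝ |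
        ∃ (u : Fin (2 * k + 3)) (p : (⊤ : SimpleGraph (Fin (2 * k + 3))).Walk u u),
          p.IsCycle ∧ Odd p.length ∧
          (p.edges.map (cCoeff k)).sum = 2 * k + 1 ∧
          x = fun e' => if e' ∈ p.edges then (1 : ℝ) else 0} := by
  by_contra hn
  obtain ⟨f, hf1, hf2⟩ := Submodule.exists_dual_map_eq_bot_of_notMem hn inferInstance
  have hvanish : ∀ v ∈ OddCyc.tightSet k, f v = 0 := by
    intro v hv
    have hmem : f v ∈ (Submodule.span ℝ (OddCyc.tightSet k)).map f :=
      ⟨v, Submodule.subset_span hv, rfl⟩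
    rw [show Submodule.span ℝ (OddCyc.tightSet k) = Submodule.span ℝ
      {x : Sym2 (Fin (2 * k + 3)) → ℝ |
        ∃ (u : Fin (2 * k + 3)) (p : (⊤ : SimpleGraph (Fin (2 * k + 3))).Walk u u),
          p.IsCycle ∧ Odd p.length ∧
          (p.edges.map (cCoeff k)).sum = 2 * k + 1 ∧
          x = fun e' => if e' ∈ p.edges then (1 : ℝ) else 0} from rfl, hf2] at hmem
    simpa using hmem
  have hsolve := OddCyc.solve k hk (fun e => f (Pi.single e 1))
    (fun a b c h1 h2 h3 hco => OddCyc.tri_rel hvanish h1 h2 h3 hco)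
    (fun a b c d e' h1 h2 h3 h4 h5 h6 h7 h8 h9 h10 hco =>
      OddCyc.pent_rel hvanish h1 h2 h3 h4 h5 h6 h7 h8 h9 h10 hco)
  induction e using Sym2.ind with
  | _ a b =>
    have hab : a ≠ b := fun h => he (by rw [h]; exact Sym2.mk_isDiag_iff.mpr rfl)
    have hzero := hsolve a b hab
    have heq : (fun e' => if e' = s(a,b) then (1:ℝ) else 0) = Pi.single s(a,b) 1 := by
      funext y
      rw [Pi.single_apply]
    rw [heq] at hf1
    exact hf1 hzero
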